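/- Let G be a finite group, g ∈ G, [g] its conjugacy class, and C the centralizer of g in G. Let (U, ρ) be a complex linear representation of G equipped with a direct-sum decomposition U = ⊕_{h∈[g]} V_h such that ρ(f)(V_h) = V_{f h f^{−1}} for all f ∈ G and h ∈ [g]. Then the subgroup C preserves V_g, and the composition V_g ↪ U ↠ U_G induces an isomorphism of vector spaces (V_g)_C ≅ U_G, where U_G = U / span{ρ(f)(u) − u : f ∈ G, u ∈ U} and (V_g)_C = V_g / span{ρ(c)(v) − v : c ∈ C, v ∈ V_g} are the spaces of coinvariants. -/

import Mathlib

/-!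
STATEMENT 16: Let `G` be a finite group, `g ∈ G`, `[g]` its conjugacy class, and `C` the
centralizer of `g`. If a complex representation `(U, ρ)` of `G` decomposes as
`U = ⊕_{h ∈ [g]} V_h` with `ρ(f)(V_h) = V_{f h f⁻¹}`, then `C` preserves `V_g` and the
composite `V_g ↪ U ↠ U_G` induces an isomorphism `(V_g)_C ≅ U_G` of coinvariant spaces.
-/

/-- Conjugation of an element of the conjugacy class of `g` by `f`. -/
def conjClassConj {G : Type} [Group G] (g : G) (f : G) (h : {h : G // IsConj g h}) :
    {h : G // IsConj g h} :=
  ⟨f * h.1 * f⁻¹, h.2.trans (isConj_iff.mpr ⟨f, rfl⟩)⟩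

namespace CoinvAux

open Submodule

variable {G : Type} [Group G] (g : G)
variable {U : Type} [AddCommGroup U] [Module ℂ U] (ρ : Representation ℂ G U)
variable (V : {h : G // IsConj g h} → Submodule ℂ U)

/-- A chosen conjugator `sig g h` with `sig g h * g * (sig g h)⁻¹ = h`. -/
noncomputable def sig (h : {h : G // IsConj g h}) : G := (isConj_iff.mp h.2).choose

lemma sig_spec (h : {h : G // IsConj g h}) : sig g h * g * (sig g h)⁻¹ = h.1 :=
  (isConj_iff.mp h.2).choose_spec

lemma sig_g0_mem :
    sig g (⟨g, IsConj.refl g⟩ : {h : G // IsConj g h}) ∈ Subgroup.centralizer {g} := by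
  rw [Subgroup.mem_centralizer_singleton_iff]
  have h1 : sig g (⟨g, IsConj.refl g⟩ : {h : G // IsConj g h}) * g *
      (sig g (⟨g, IsConj.refl g⟩ : {h : G // IsConj g h}))⁻¹ = g := sig_spec g _
  calc sig g (⟨g, IsConj.refl g⟩ : {h : G // IsConj g h}) * g
      = (sig g ⟨g, IsConj.refl g⟩ * g * (sig g ⟨g, IsConj.refl g⟩)⁻¹) *
        sig g ⟨g, IsConj.refl g⟩ := by group
    _ = g * sig g ⟨g, IsConj.refl g⟩ := by rw [h1]

lemma mem_conj (hConj : ∀ (f : G) (h : {h : G // IsConj g h}),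
      (V h).map (ρ f) = V (conjClassConj g f h))
    {f : G} {h : {h : G // IsConj g h}} {u : U} (hu : u ∈ V h) :
    ρ f u ∈ V (conjClassConj g f h) := by
  rw [← hConj f h]; exact Submodule.mem_map_of_mem hu

lemma conj_sig_inv (h : {h : G // IsConj g h}) :
    conjClassConj g (sig g h)⁻¹ h = ⟨g, IsConj.refl g⟩ := by
  apply Subtype.ext
  show (sig g h)⁻¹ * h.1 * ((sig g h)⁻¹)⁻¹ = g
  rw [← sig_spec g h]; group

lemma mem_Vg (hConj : ∀ (f : G) (h : {h : G // IsConj g h}),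
      (V h).map (ρ f) = V (conjClassConj g f h))
    {h : {h : G // IsConj g h}} {u : U} (hu : u ∈ V h) :
    ρ (sig g h)⁻¹ u ∈ V ⟨g, IsConj.refl g⟩ := by
  have := mem_conj g ρ V hConj (f := (sig g h)⁻¹) hu
  rwa [conj_sig_inv] at this

/-- The `C`-relations submodule of `V_g`. -/
noncomputable def Ncrel : Submodule ℂ (V ⟨g, IsConj.refl g⟩) :=
  (Submodule.span ℂ {x : U | ∃ c ∈ Subgroup.centralizer {g},
      ∃ v ∈ V ⟨g, IsConj.refl g⟩, x = ρ c v - v}).comap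
    (V ⟨g, IsConj.refl g⟩).subtype

lemma mkN_eq {c : G} (hc : c ∈ Subgroup.centralizer {g})
    (w w' : V ⟨g, IsConj.refl g⟩) (hw : (w' : U) = ρ c w) :
    (Submodule.Quotient.mk w' : _ ⧸ Ncrel g ρ V) = Submodule.Quotient.mk w := by
  rw [Submodule.Quotient.eq, Ncrel, Submodule.mem_comap, Submodule.subtype_apply,
    Submodule.coe_sub, hw]
  exact Submodule.subset_span ⟨c, hc, w, w.2, rfl⟩

/-- The partial retraction on one summand. -/
noncomputable def phi (hConj : ∀ (f : G) (h : {h : G // IsConj g h}),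
      (V h).map (ρ f) = V (conjClassConj g f h)) (h : {h : G // IsConj g h}) :
    V h →ₗ[ℂ] (V ⟨g, IsConj.refl g⟩ ⧸ Ncrel g ρ V) :=
  (Ncrel g ρ V).mkQ ∘ₗ LinearMap.codRestrict _ ((ρ (sig g h)⁻¹) ∘ₗ (V h).subtype)
    (fun v => mem_Vg g ρ V hConj v.2)

lemma phi_apply (hConj : ∀ (f : G) (h : {h : G // IsConj g h}),
      (V h).map (ρ f) = V (conjClassConj g f h)) (h : {h : G // IsConj g h}) (v : V h) :
    phi g ρ V hConj h v =
      Submodule.Quotient.mk ⟨ρ (sig g h)⁻¹ (v : U), mem_Vg g ρ V hConj v.2⟩ := rfl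

variable [DecidableEq {h : G // IsConj g h}]

/-- The retraction `U → (V_g)_C`. -/
noncomputable def Phi' (hConj : ∀ (f : G) (h : {h : G // IsConj g h}),
      (V h).map (ρ f) = V (conjClassConj g f h))
    (hIndep : iSupIndep V) (hSpan : ⨆ h : {h : G // IsConj g h}, V h = ⊤) :
    U →ₗ[ℂ] (V ⟨g, IsConj.refl g⟩ ⧸ Ncrel g ρ V) :=
  (DirectSum.toModule ℂ _ _ (fun h => phi g ρ V hConj h)) ∘ₗ
    (LinearEquiv.ofBijective (DirectSum.coeLinearMap V)
      (DirectSum.isInternal_submodule_of_iSupIndep_of_iSup_eq_top hIndep hSpan :)).symm.toLinearMap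

lemma Phi'_apply (hConj : ∀ (f : G) (h : {h : G // IsConj g h}),
      (V h).map (ρ f) = V (conjClassConj g f h))
    (hIndep : iSupIndep V) (hSpan : ⨆ h : {h : G // IsConj g h}, V h = ⊤)
    {h : {h : G // IsConj g h}} {u : U} (hu : u ∈ V h) :
    Phi' g ρ V hConj hIndep hSpan u = phi g ρ V hConj h ⟨u, hu⟩ := by
  have hsymm : (LinearEquiv.ofBijective (DirectSum.coeLinearMap V)
      (DirectSum.isInternal_submodule_of_iSupIndep_of_iSup_eq_top hIndep hSpan :)).symm u =
      DirectSum.lof ℂ _ (fun h => V h) h ⟨u, hu⟩ := by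
    rw [LinearEquiv.symm_apply_eq, DirectSum.lof_eq_of]
    exact (DirectSum.coeLinearMap_of V h ⟨u, hu⟩).symm
  simp only [Phi', LinearMap.coe_comp, Function.comp_apply, LinearEquiv.coe_coe, hsymm,
    DirectSum.toModule_lof]

lemma Phi'_rho (hConj : ∀ (f : G) (h : {h : G // IsConj g h}),
      (V h).map (ρ f) = V (conjClassConj g f h))
    (hIndep : iSupIndep V) (hSpan : ⨆ h : {h : G // IsConj g h}, V h = ⊤)
    (f : G) (u : U) :
    Phi' g ρ V hConj hIndep hSpan (ρ f u) = Phi' g ρ V hConj hIndep hSpan u := by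
  have hu : u ∈ ⨆ h, V h := hSpan ▸ Submodule.mem_top
  refine Submodule.iSup_induction' (p := V) (motive := fun u _ =>
    Phi' g ρ V hConj hIndep hSpan (ρ f u) = Phi' g ρ V hConj hIndep hSpan u) ?_ ?_ ?_ hu
  · intro h u hu
    have hfu : ρ f u ∈ V (conjClassConj g f h) := mem_conj g ρ V hConj hu
    rw [Phi'_apply g ρ V hConj hIndep hSpan hfu, Phi'_apply g ρ V hConj hIndep hSpan hu,
      phi_apply, phi_apply]
    set h' := conjClassConj g f h with hh'
    set c : G := (sig g h')⁻¹ * f * sig g h with hc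
    clear_value c
    have hcC : c ∈ Subgroup.centralizer {g} := by
      have key : c * g * c⁻¹ = g := by
        have e1 : sig g h * g * (sig g h)⁻¹ = h.1 := sig_spec g h
        have e2 : sig g h' * g * (sig g h')⁻¹ = h'.1 := sig_spec g h'
        have e3 : h'.1 = f * h.1 * f⁻¹ := rfl
        have key0 : c * g * c⁻¹ =
            (sig g h')⁻¹ * (f * (sig g h * g * (sig g h)⁻¹) * f⁻¹) * sig g h' := by
          rw [hc]; group
        rw [key0, e1, ← e3, ← e2]; group
      rw [Subgroup.mem_centralizer_singleton_iff]
      calc c * g = c * g * c⁻¹ * c := by group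
        _ = g * c := by rw [key]
    refine mkN_eq g ρ V hcC _ _ ?_
    show ρ (sig g h')⁻¹ (ρ f u) = ρ c (ρ (sig g h)⁻¹ u)
    have ha : ρ (sig g h')⁻¹ (ρ f u) = ρ ((sig g h')⁻¹ * f) u := by
      rw [map_mul]; rfl
    have hb : ρ c (ρ (sig g h)⁻¹ u) = ρ (c * (sig g h)⁻¹) u := by
      rw [map_mul]; rfl
    rw [ha, hb]
    congr 1
    rw [hc]; group
  · simp
  · intro x y _ _ ihx ihy
    rw [map_add, map_add, map_add, ihx, ihy]

end CoinvAux

theorem coinvariants_of_conjugacy_class_decomposition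
    (G : Type) [Group G] [Finite G] (g : G)
    (U : Type) [AddCommGroup U] [Module ℂ U] (ρ : Representation ℂ G U)
    -- a direct sum decomposition U = ⊕_{h ∈ [g]} V_h …
    (V : {h : G // IsConj g h} → Submodule ℂ U)
    (hIndep : iSupIndep V)
    (hSpan : ⨆ h : {h : G // IsConj g h}, V h = ⊤)
    -- … permuted by G according to conjugation: ρ(f)(V_h) = V_{f h f⁻¹}
    (hConj : ∀ (f : G) (h : {h : G // IsConj g h}),
      (V h).map (ρ f) = V (conjClassConj g f h)) :
    -- the centralizer C of g preserves V_g …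
    (∀ c ∈ Subgroup.centralizer {g},
      (V ⟨g, IsConj.refl g⟩).map (ρ c) = V ⟨g, IsConj.refl g⟩) ∧
    -- … and V_g ↪ U ↠ U_G induces an isomorphism (V_g)_C ≅ U_G of coinvariants:
    (∃ e :
      (↥(V ⟨g, IsConj.refl g⟩) ⧸
        (Submodule.span ℂ {x : U | ∃ c ∈ Subgroup.centralizer {g},
            ∃ v ∈ V ⟨g, IsConj.refl g⟩, x = ρ c v - v}).comap
          (V ⟨g, IsConj.refl g⟩).subtype) ≃ₗ[ℂ]
      (U ⧸ Submodule.span ℂ {x : U | ∃ (f : G) (u : U), x = ρ f u - u}),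
      ∀ v : ↥(V ⟨g, IsConj.refl g⟩),
        e (Submodule.Quotient.mk v) = Submodule.Quotient.mk (v : U)) := by
  classical
  constructor
  · intro c hc
    rw [hConj c ⟨g, IsConj.refl g⟩]
    congr 1
    apply Subtype.ext
    show c * g * c⁻¹ = g
    have := (Subgroup.mem_centralizer_iff.mp hc) g rfl
    rw [← this]; group
  · set g₀ : {h : G // IsConj g h} := ⟨g, IsConj.refl g⟩ with hg₀
    set M : Submodule ℂ U := Submodule.span ℂ {x : U | ∃ (f : G) (u : U), x = ρ f u - u} with hM
    have hMle : ∀ (f : G) (u : U),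
        (Submodule.Quotient.mk (ρ f u) : U ⧸ M) = Submodule.Quotient.mk u :=
      fun f u => (Submodule.Quotient.eq M).mpr (Submodule.subset_span ⟨f, u, rfl⟩)
    have hker : M ≤ LinearMap.ker (CoinvAux.Phi' g ρ V hConj hIndep hSpan) := by
      rw [Submodule.span_le]
      rintro x ⟨f, u, rfl⟩
      rw [SetLike.mem_coe, LinearMap.mem_ker, map_sub,
        CoinvAux.Phi'_rho g ρ V hConj hIndep hSpan f u, sub_self]
    set Φ := M.liftQ (CoinvAux.Phi' g ρ V hConj hIndep hSpan) hker with hΦ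
    have hNle : CoinvAux.Ncrel g ρ V ≤ M.comap (V g₀).subtype := by
      intro x hx
      rw [CoinvAux.Ncrel, Submodule.mem_comap] at hx
      rw [Submodule.mem_comap]
      refine Submodule.span_le.mpr ?_ hx
      rintro y ⟨c, hc, v, hv, rfl⟩
      exact Submodule.subset_span ⟨c, v, rfl⟩
    set Ψ := Submodule.mapQ (CoinvAux.Ncrel g ρ V) M (V g₀).subtype hNle with hΨ
    have hΨmk : ∀ v : V g₀, Ψ (Submodule.Quotient.mk v) = Submodule.Quotient.mk (v : U) :=
      fun v => by rw [hΨ, Submodule.mapQ_apply, Submodule.subtype_apply]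
    have hΨΦ : Ψ ∘ₗ Φ = LinearMap.id := by
      refine LinearMap.ext fun x => ?_
      obtain ⟨u, rfl⟩ := Submodule.Quotient.mk_surjective _ x
      show Ψ (Φ (Submodule.Quotient.mk u)) = Submodule.Quotient.mk u
      rw [hΦ, Submodule.liftQ_apply]
      have hu : u ∈ ⨆ h, V h := hSpan ▸ Submodule.mem_top
      refine Submodule.iSup_induction' (p := V) (motive := fun u _ =>
        Ψ (CoinvAux.Phi' g ρ V hConj hIndep hSpan u) = Submodule.Quotient.mk u) ?_ ?_ ?_ hu
      · intro h u hu
        rw [CoinvAux.Phi'_apply g ρ V hConj hIndep hSpan hu, CoinvAux.phi_apply]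
        rw [hΨmk]
        exact hMle (CoinvAux.sig g h)⁻¹ u
      · simp
      · intro x y _ _ ihx ihy
        rw [map_add, map_add, ihx, ihy]
        simp [Submodule.Quotient.mk_add]
    have hΦΨ : Φ ∘ₗ Ψ = LinearMap.id := by
      refine LinearMap.ext fun x => ?_
      obtain ⟨v, rfl⟩ := Submodule.Quotient.mk_surjective _ x
      show Φ (Ψ (Submodule.Quotient.mk v)) = Submodule.Quotient.mk v
      rw [hΨmk, hΦ, Submodule.liftQ_apply,
        CoinvAux.Phi'_apply g ρ V hConj hIndep hSpan v.2, CoinvAux.phi_apply]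
      exact CoinvAux.mkN_eq g ρ V (Subgroup.inv_mem _ (CoinvAux.sig_g0_mem g)) v _ rfl
    refine ⟨LinearEquiv.ofLinear Ψ Φ hΨΦ hΦΨ, fun v => ?_⟩
    show Ψ (Submodule.Quotient.mk v) = Submodule.Quotient.mk (v : U)
    exact hΨmk v
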